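/- For every Δt₀ ∈ (0,1] there exists a constant C(Δt₀) ∈ (0,∞) such that |Ψ_t′(z)| ≤ C(Δt₀)(1 + z²) for all t ∈ [0,Δt₀] and all z ∈ ℝ. -/

import Mathlib

noncomputable section

/-- The flow map `Φ_t(z) = z / √(z² + (1 - z²) e^{-2t})` of the ODE `ż = z - z³`. -/
def Phi (t z : ℝ) : ℝ := z / Real.sqrt (z ^ 2 + (1 - z ^ 2) * Real.exp (-2 * t))

/-- `Ψ_t(z) = (Φ_t(z) - z)/t` for `t > 0`, and `Ψ_0(z) = z - z³`. -/
def Psi (t z : ℝ) : ℝ := if t = 0 then z - z ^ 3 else (Phi t z - z) / t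

lemma Dpos (t z : ℝ) (ht : 0 ≤ t) :
    0 < z ^ 2 + (1 - z ^ 2) * Real.exp (-2 * t) := by
  have ha : 0 < Real.exp (-2 * t) := Real.exp_pos _
  have ha1 : Real.exp (-2 * t) ≤ 1 := Real.exp_le_one_iff.mpr (by linarith)
  nlinarith [sq_nonneg z]

lemma phi_hasDeriv (t z : ℝ) (ht : 0 ≤ t) :
    HasDerivAt (Phi t)
      (Real.exp (-2 * t) /
        ((z ^ 2 + (1 - z ^ 2) * Real.exp (-2 * t)) *
          Real.sqrt (z ^ 2 + (1 - z ^ 2) * Real.exp (-2 * t)))) z := by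
  have hD : 0 < z ^ 2 + (1 - z ^ 2) * Real.exp (-2 * t) := Dpos t z ht
  have hg : HasDerivAt (fun y : ℝ => y ^ 2 + (1 - y ^ 2) * Real.exp (-2 * t))
      (2 * z * (1 - Real.exp (-2 * t))) z := by
    have h1 : HasDerivAt (fun y : ℝ => y ^ 2) (2 * z) z := by
      simpa using hasDerivAt_pow 2 z
    have h2 := h1.add (((hasDerivAt_const z (1:ℝ)).sub h1).mul_const (Real.exp (-2 * t)))
    exact h2.congr_deriv (by ring)
  have hsq := hg.sqrt (ne_of_gt hD)
  have hs : 0 < Real.sqrt (z ^ 2 + (1 - z ^ 2) * Real.exp (-2 * t)) :=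
    Real.sqrt_pos.mpr hD
  have hdiv := (hasDerivAt_id z).div hsq (ne_of_gt hs)
  have hdiv' : HasDerivAt (Phi t)
      ((1 * Real.sqrt (z ^ 2 + (1 - z ^ 2) * Real.exp (-2 * t)) -
        z * (2 * z * (1 - Real.exp (-2 * t)) /
          (2 * Real.sqrt (z ^ 2 + (1 - z ^ 2) * Real.exp (-2 * t))))) /
        Real.sqrt (z ^ 2 + (1 - z ^ 2) * Real.exp (-2 * t)) ^ 2) z := hdiv
  have h2 : Real.sqrt (z ^ 2 + (1 - z ^ 2) * Real.exp (-2 * t)) ^ 2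
      = z ^ 2 + (1 - z ^ 2) * Real.exp (-2 * t) := Real.sq_sqrt hD.le
  have key_abs : ∀ (a S : ℝ), 0 < S →
      (1 * S - z * (2 * z * (1 - a) / (2 * S))) / S ^ 2
        = (S ^ 2 - z ^ 2 * (1 - a)) / (S ^ 2 * S) := by
    intro a S hS
    field_simp
  have key : (1 * Real.sqrt (z ^ 2 + (1 - z ^ 2) * Real.exp (-2 * t)) -
        z * (2 * z * (1 - Real.exp (-2 * t)) /
          (2 * Real.sqrt (z ^ 2 + (1 - z ^ 2) * Real.exp (-2 * t))))) /
        Real.sqrt (z ^ 2 + (1 - z ^ 2) * Real.exp (-2 * t)) ^ 2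
      = Real.exp (-2 * t) /
        ((z ^ 2 + (1 - z ^ 2) * Real.exp (-2 * t)) *
          Real.sqrt (z ^ 2 + (1 - z ^ 2) * Real.exp (-2 * t))) := by
    rw [key_abs _ _ hs, h2]
    congr 1
    ring
  rw [key] at hdiv'
  exact hdiv'

set_option maxHeartbeats 1000000 in
/-- Abstract algebraic bound: with `a = Y²`, `D = S²`. -/
lemma aux_bound (t D S Y w : ℝ) (ht : 0 ≤ t) (hw : 0 ≤ w)
    (hs : 0 < S) (hS2 : S ^ 2 = D)
    (hY0 : 0 < Y) (hY3 : 1 / 3 ≤ Y) (hYt : 1 - t ≤ Y) (hY1 : Y ≤ 1)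
    (hYS : Y ≤ S)
    (hDa : D - Y ^ 2 = w * (1 - Y ^ 2)) (h1a : 1 - Y ^ 2 ≤ 2 * t) :
    |Y ^ 2 / (D * S) - 1| ≤ 100 * t * (1 + w) := by
  have hD : 0 < D := by nlinarith
  have hDS : 0 < D * S := mul_pos hD hs
  have h1a0 : 0 ≤ 1 - Y ^ 2 := by nlinarith
  have hDage : 0 ≤ D - Y ^ 2 := by rw [hDa]; positivity
  -- x = a - aY ∈ [0, t]
  have hx0 : 0 ≤ Y ^ 2 - Y ^ 2 * Y := by nlinarith
  have hxt : Y ^ 2 - Y ^ 2 * Y ≤ t := by nlinarith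
  -- y = DS - aY = S³ - Y³ ∈ [0, 3S(D-a)]
  have hyrw : D * S - Y ^ 2 * Y = S ^ 3 - Y ^ 3 := by rw [← hS2]; ring
  have hy0 : 0 ≤ S ^ 3 - Y ^ 3 := by nlinarith
  have hy1 : S ^ 3 - Y ^ 3 ≤ 3 * S * (D - Y ^ 2) := by
    have h : S ^ 2 - Y ^ 2 = D - Y ^ 2 := by rw [hS2]
    nlinarith [sq_nonneg (S - Y)]
  have habs : |Y ^ 2 - D * S| ≤ t + 3 * S * (D - Y ^ 2) := by
    rw [abs_le]; constructor
    · have : 0 ≤ 3 * S * (D - Y ^ 2) := by positivity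
      nlinarith
    · nlinarith [mul_nonneg (by positivity : (0:ℝ) ≤ 3 * S) hDage]
  -- lower bounds on D and D*S
  have hYD : Y ^ 2 ≤ D := by
    rw [← hS2]; exact pow_le_pow_left₀ hY0.le hYS 2
  have hD9 : (1:ℝ)/9 ≤ D := by nlinarith [hY3, hY0.le]
  have hDS27 : (1:ℝ)/27 ≤ D * S := by
    have h1 : Y ^ 2 * Y ≤ D * S := mul_le_mul hYD hYS hY0.le hD.le
    have h2 : (1:ℝ)/27 ≤ Y ^ 2 * Y := by nlinarith [hY3, hY0.le]
    linarith
  have hfrac : Y ^ 2 / (D * S) - 1 = (Y ^ 2 - D * S) / (D * S) := by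
    field_simp
  rw [hfrac, abs_div, abs_of_pos hDS, div_le_iff₀ hDS]
  have hb1 : t ≤ 27 * t * (D * S) := by
    have h27 : (1:ℝ) ≤ 27 * (D * S) := by linarith
    calc t = t * 1 := by ring
      _ ≤ t * (27 * (D * S)) := mul_le_mul_of_nonneg_left h27 ht
      _ = 27 * t * (D * S) := by ring
  have hDa2 : D - Y ^ 2 ≤ 2 * t * w := by
    rw [hDa]
    calc w * (1 - Y ^ 2) ≤ w * (2 * t) := mul_le_mul_of_nonneg_left h1a hw
      _ = 2 * t * w := by ring
  have hb2 : 3 * S * (D - Y ^ 2) ≤ 6 * t * w * S := by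
    calc 3 * S * (D - Y ^ 2) ≤ 3 * S * (2 * t * w) :=
          mul_le_mul_of_nonneg_left hDa2 (by positivity)
      _ = 6 * t * w * S := by ring
  have hb3 : 6 * t * w * S ≤ 54 * t * w * (D * S) := by
    have h9 : (1:ℝ) ≤ 9 * D := by linarith
    calc 6 * t * w * S = 6 * t * w * S * 1 := by ring
      _ ≤ 6 * t * w * S * (9 * D) :=
          mul_le_mul_of_nonneg_left h9 (by positivity)
      _ = 54 * t * w * (D * S) := by ring
  calc |Y ^ 2 - D * S| ≤ t + 3 * S * (D - Y ^ 2) := habs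
    _ ≤ 27 * t * (D * S) + 54 * t * w * (D * S) := by linarith
    _ ≤ 100 * t * (1 + w) * (D * S) := by
        have p1 : 0 ≤ t * (D * S) := mul_nonneg ht hDS.le
        have p2 : 0 ≤ t * w * (D * S) := mul_nonneg (mul_nonneg ht hw) hDS.le
        nlinarith [p1, p2]

lemma phi_deriv_bound (t z : ℝ) (ht : 0 ≤ t) (ht1 : t ≤ 1) :
    |Real.exp (-2 * t) /
        ((z ^ 2 + (1 - z ^ 2) * Real.exp (-2 * t)) *
          Real.sqrt (z ^ 2 + (1 - z ^ 2) * Real.exp (-2 * t))) - 1|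
      ≤ 100 * t * (1 + z ^ 2) := by
  have hY2 : Real.exp (-t) ^ 2 = Real.exp (-2 * t) := by
    rw [← Real.exp_nat_mul]; congr 1; push_cast; ring
  have hD : 0 < z ^ 2 + (1 - z ^ 2) * Real.exp (-2 * t) := Dpos t z ht
  have hY0 : 0 < Real.exp (-t) := Real.exp_pos _
  have hY1 : Real.exp (-t) ≤ 1 := Real.exp_le_one_iff.mpr (by linarith)
  have hYt : 1 - t ≤ Real.exp (-t) := by
    have := Real.add_one_le_exp (-t); linarith
  have hY3 : (1:ℝ)/3 ≤ Real.exp (-t) := by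
    have h1 : Real.exp (-t) * Real.exp t = 1 := by
      rw [← Real.exp_add]; simp
    have h2 : Real.exp t ≤ Real.exp 1 := Real.exp_le_exp.mpr ht1
    have h3 : Real.exp 1 < 2.7182818286 := Real.exp_one_lt_d9
    nlinarith [Real.exp_pos t]
  have hYS : Real.exp (-t) ≤ Real.sqrt (z ^ 2 + (1 - z ^ 2) * Real.exp (-2 * t)) := by
    rw [show Real.exp (-t) = Real.sqrt (Real.exp (-t) ^ 2) from (Real.sqrt_sq hY0.le).symm]
    apply Real.sqrt_le_sqrt
    rw [hY2]
    nlinarith [sq_nonneg z, Real.exp_le_one_iff.mpr (show -2*t ≤ 0 by linarith)]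
  have h1a : 1 - Real.exp (-t) ^ 2 ≤ 2 * t := by
    rw [hY2]
    have := Real.add_one_le_exp (-2 * t); linarith
  have hDa : (z ^ 2 + (1 - z ^ 2) * Real.exp (-2 * t)) - Real.exp (-t) ^ 2
      = z ^ 2 * (1 - Real.exp (-t) ^ 2) := by rw [hY2]; ring
  have := aux_bound t (z ^ 2 + (1 - z ^ 2) * Real.exp (-2 * t))
    (Real.sqrt (z ^ 2 + (1 - z ^ 2) * Real.exp (-2 * t))) (Real.exp (-t)) (z ^ 2)
    ht (sq_nonneg z) (Real.sqrt_pos.mpr hD) (Real.sq_sqrt hD.le)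
    hY0 hY3 hYt hY1 hYS hDa h1a
  rw [hY2] at this
  exact this

/-- For every `Δt₀ ∈ (0,1]` there exists `C(Δt₀) ∈ (0,∞)` such that
`|Ψ_t′(z)| ≤ C(Δt₀) (1 + z²)` for all `t ∈ [0, Δt₀]` and all `z ∈ ℝ`. -/
theorem psi_deriv_quadratic_growth (Δt₀ : ℝ) (hΔt₀ : Δt₀ ∈ Set.Ioc (0 : ℝ) 1) :
    ∃ C : ℝ, 0 < C ∧ ∀ t ∈ Set.Icc (0 : ℝ) Δt₀, ∀ z : ℝ,
      |deriv (Psi t) z| ≤ C * (1 + z ^ 2) := by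
  obtain ⟨hΔ0, hΔ1⟩ := hΔt₀
  refine ⟨100, by norm_num, ?_⟩
  rintro t ⟨ht0, htΔ⟩ z
  rcases eq_or_lt_of_le ht0 with h0 | h0
  · -- t = 0
    have hPsi : Psi t = fun z : ℝ => z - z ^ 3 := by
      funext y; simp [Psi, ← h0]
    rw [hPsi]
    have hd : HasDerivAt (fun z : ℝ => z - z ^ 3) (1 - 3 * z ^ 2) z := by
      have := (hasDerivAt_id z).sub (hasDerivAt_pow 3 z)
      exact this
    rw [hd.deriv, abs_le]
    constructor <;> nlinarith [sq_nonneg z]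
  · -- t > 0
    have ht1 : t ≤ 1 := le_trans htΔ hΔ1
    have hPsi : Psi t = fun y : ℝ => (Phi t y - y) / t := by
      funext y; simp [Psi, (ne_of_gt h0)]
    have hd : HasDerivAt (fun y : ℝ => (Phi t y - y) / t)
        ((Real.exp (-2 * t) /
          ((z ^ 2 + (1 - z ^ 2) * Real.exp (-2 * t)) *
            Real.sqrt (z ^ 2 + (1 - z ^ 2) * Real.exp (-2 * t))) - 1) / t) z :=
      ((phi_hasDeriv t z ht0).sub (hasDerivAt_id z)).div_const t
    rw [hPsi, hd.deriv, abs_div, abs_of_pos h0, div_le_iff₀ h0]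
    calc |Real.exp (-2 * t) /
          ((z ^ 2 + (1 - z ^ 2) * Real.exp (-2 * t)) *
            Real.sqrt (z ^ 2 + (1 - z ^ 2) * Real.exp (-2 * t))) - 1|
        ≤ 100 * t * (1 + z ^ 2) := phi_deriv_bound t z ht0 ht1
      _ = 100 * (1 + z ^ 2) * t := by ring
end
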